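/- Let (X, μ) be a probability space and let s : X → ℝ^d be measurable with each component s_j in L²(μ). If the Fisher information matrix I ∈ ℝ^{d×d} with entries I_{ij} = ∫ s_i(x) s_j(x) dμ(x) is nonsingular, then there exist bounded measurable functions f_1, …, f_d : X → ℝ such that the d×d matrix J with entries J_{ij} = ∫ f_i(x) s_j(x) dμ(x) is invertible. -/

import Mathlib

open MeasureTheory Filter

private lemma trunc_abs_le (n : ℕ) (y : ℝ) :
    |max (-(n : ℝ)) (min (n : ℝ) y)| ≤ |y| := by
  have hn : (0 : ℝ) ≤ n := Nat.cast_nonneg n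
  rcases le_total 0 y with h | h
  · rw [abs_of_nonneg h, abs_of_nonneg (le_max_of_le_right (le_min hn h))]
    exact max_le (by linarith) (min_le_right _ _)
  · have hy : (y : ℝ) ≤ max (-(n : ℝ)) (min (n : ℝ) y) :=
      le_max_of_le_right (le_min (le_trans h hn) le_rfl)
    rw [abs_of_nonpos h,
        abs_of_nonpos (max_le (by linarith) (le_trans (min_le_right _ _) h))]
    linarith

private lemma trunc_tendsto (y : ℝ) :
    Tendsto (fun n : ℕ => max (-(n : ℝ)) (min (n : ℝ) y)) atTop (nhds y) := by
  apply Tendsto.congr' _ tendsto_const_nhds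
  filter_upwards [eventually_ge_atTop ⌈|y|⌉₊] with n hn
  have h1 : |y| ≤ (n : ℝ) := le_trans (Nat.le_ceil _) (by exact_mod_cast hn)
  have h2 : y ≤ (n : ℝ) := le_trans (le_abs_self y) h1
  have h3 : -(n : ℝ) ≤ y := by
    have := neg_abs_le y; linarith
  rw [min_eq_right h2, max_eq_right h3]

/-- At a regular point (nonsingular Fisher information), there exist finitely many
bounded measurable observables whose Jacobian `J_{ij} = ∫ f_i s_j dμ` is invertible. -/
theorem exists_observable_chart_of_fisher_nonsingular {X : Type*} [MeasurableSpace X]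
    (μ : Measure X) [IsProbabilityMeasure μ] {d : ℕ} (s : Fin d → X → ℝ)
    (hs_meas : ∀ j, Measurable (s j)) (hs_L2 : ∀ j, MemLp (s j) 2 μ)
    (I : Matrix (Fin d) (Fin d) ℝ)
    (hI : ∀ i j, I i j = ∫ x, s i x * s j x ∂μ)
    (hI_inv : IsUnit I) :
    ∃ f : Fin d → X → ℝ,
      (∀ i, Measurable (f i)) ∧
      (∀ i, ∃ C : ℝ, ∀ x, |f i x| ≤ C) ∧
      IsUnit (Matrix.of fun i j => ∫ x, f i x * s j x ∂μ : Matrix (Fin d) (Fin d) ℝ) := by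
  -- truncated score functions
  set g : ℕ → Fin d → X → ℝ :=
    fun n i x => max (-(n : ℝ)) (min (n : ℝ) (s i x)) with hg
  have hg_meas : ∀ n i, Measurable (g n i) := fun n i =>
    measurable_const.max (measurable_const.min (hs_meas i))
  have hg_bd : ∀ n i x, |g n i x| ≤ (n : ℝ) := by
    intro n i x
    have hn : (0 : ℝ) ≤ n := Nat.cast_nonneg n
    rw [abs_le]
    constructor
    · exact le_max_left _ _
    · exact max_le (by linarith) (min_le_left _ _)
  -- the matrix at truncation level n
  set M : ℕ → Matrix (Fin d) (Fin d) ℝ :=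
    fun n => Matrix.of fun i j => ∫ x, g n i x * s j x ∂μ with hM
  -- entrywise convergence by dominated convergence
  have hdom : ∀ i j : Fin d, Integrable (fun x => |s i x * s j x|) μ := by
    intro i j
    have h1 : MemLp (s i • s j) 1 μ :=
      (hs_L2 j).smul (hs_L2 i)
    have h2 := memLp_one_iff_integrable.mp h1
    simpa [Pi.smul_apply, smul_eq_mul] using h2.abs
  have hconv : ∀ i j, Tendsto (fun n => M n i j) atTop (nhds (I i j)) := by
    intro i j
    rw [hI i j]
    exact tendsto_integral_of_dominated_convergence (fun x => |s i x * s j x|)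
      (fun n => ((hg_meas n i).mul (hs_meas j)).aestronglyMeasurable)
      (hdom i j)
      (fun n => ae_of_all _ fun x => by
        simp only [Real.norm_eq_abs, abs_mul]
        exact mul_le_mul_of_nonneg_right (trunc_abs_le n (s i x)) (abs_nonneg _))
      (ae_of_all _ fun x => (trunc_tendsto (s i x)).mul tendsto_const_nhds)
  -- convergence of determinants
  have hMconv : Tendsto M atTop (nhds I) := by
    refine tendsto_pi_nhds.mpr ?_
    intro i
    rw [tendsto_pi_nhds]
    intro j
    exact hconv i j
  have hdetI : I.det ≠ 0 := by
    have := (Matrix.isUnit_iff_isUnit_det I).mp hI_inv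
    exact isUnit_iff_ne_zero.mp this
  have hdet_conv : Tendsto (fun n => (M n).det) atTop (nhds I.det) :=
    (continuous_id.matrix_det.tendsto I).comp hMconv
  have hev : ∀ᶠ n in atTop, (M n).det ≠ 0 := hdet_conv.eventually_ne hdetI
  obtain ⟨n, hn⟩ := hev.exists
  refine ⟨g n, hg_meas n, fun i => ⟨n, fun x => hg_bd n i x⟩, ?_⟩
  rw [Matrix.isUnit_iff_isUnit_det]
  exact isUnit_iff_ne_zero.mpr hn
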